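/- arXiv:2406.12067 — 5 statements merged into one kernel-verified Lean document; each statement's English description precedes it below -/
import Mathlib

section
/- Let I : ℝ → ℝ be a continuous function and let U be its concave envelope, i.e., U(z) = inf{Φ(z) : Φ concave and Φ ≥ I}. Assume U takes finite values. If there is an open interval (a,b) ⊂ ℝ on which I < U, then U is affine on (a,b). -/
open Set

lemma affine_concave (α β : ℝ) : ConcaveOn ℝ univ (fun w : ℝ => α * w + β) := by
  refine ⟨convex_univ, ?_⟩
  intro x _ y _ s t hs ht hst
  simp only [smul_eq_mul]
  apply le_of_eq
  linear_combination β * hst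

lemma chord_le_of_concave {U : ℝ → ℝ} (hU : ConcaveOn ℝ univ U) {x z : ℝ} (hxz : x < z)
    {w : ℝ} (hw : w ∈ Icc x z) :
    U x + (U z - U x) / (z - x) * (w - x) ≤ U w := by
  have hzx : (0:ℝ) < z - x := by linarith
  have hs0 : 0 ≤ (z - w) / (z - x) := by
    apply div_nonneg _ hzx.le; linarith [hw.2]
  have ht0 : 0 ≤ (w - x) / (z - x) := by
    apply div_nonneg _ hzx.le; linarith [hw.1]
  have hst : (z - w) / (z - x) + (w - x) / (z - x) = 1 := by
    field_simp
    ring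
  have h := hU.2 (mem_univ x) (mem_univ z) hs0 ht0 hst
  simp only [smul_eq_mul] at h
  have hcomb : (z - w) / (z - x) * x + (w - x) / (z - x) * z = w := by
    field_simp; ring
  rw [hcomb] at h
  refine le_trans (le_of_eq ?_) h
  field_simp
  ring

/-- outside the chord interval, concave U lies below the chord line -/
lemma le_chord_of_concave {U : ℝ → ℝ} (hU : ConcaveOn ℝ univ U) {x z : ℝ} (hxz : x < z)
    {w : ℝ} (hw : w ∉ Ioo x z) :
    U w ≤ U x + (U z - U x) / (z - x) * (w - x) := by
  have hzx : (0:ℝ) < z - x := by linarith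
  have hgoal : U x + (U z - U x) / (z - x) * (w - x)
      = ((z - x) * U x + (U z - U x) * (w - x)) / (z - x) := by
    field_simp
  rcases le_or_gt w x with h1 | h1
  · rcases eq_or_lt_of_le h1 with rfl | h1
    · simp
    have hzw : (0:ℝ) < z - w := by linarith
    have hs0 : 0 ≤ (z - x) / (z - w) := by positivity
    have ht0 : 0 ≤ (x - w) / (z - w) := by
      apply div_nonneg _ hzw.le; linarith
    have hst : (z - x) / (z - w) + (x - w) / (z - w) = 1 := by field_simp; ring
    have h := hU.2 (mem_univ w) (mem_univ z) hs0 ht0 hst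
    simp only [smul_eq_mul] at h
    have hcomb : (z - x) / (z - w) * w + (x - w) / (z - w) * z = x := by
      field_simp; ring
    rw [hcomb] at h
    have h' : (z - x) * U w + (x - w) * U z ≤ (z - w) * U x := by
      have h2 := mul_le_mul_of_nonneg_right h hzw.le
      calc (z - x) * U w + (x - w) * U z
          = ((z - x) / (z - w) * U w + (x - w) / (z - w) * U z) * (z - w) := by
            field_simp
        _ ≤ U x * (z - w) := h2
        _ = (z - w) * U x := by ring
    rw [hgoal, le_div_iff₀ hzx]
    nlinarith [h']
  · rcases lt_or_ge w z with h2 | h2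
    · exact absurd ⟨h1, h2⟩ hw
    rcases eq_or_lt_of_le h2 with rfl | h2
    · apply le_of_eq; field_simp; ring
    have hwx : (0:ℝ) < w - x := by linarith
    have hs0 : 0 ≤ (w - z) / (w - x) := by
      apply div_nonneg _ hwx.le; linarith
    have ht0 : 0 ≤ (z - x) / (w - x) := by positivity
    have hst : (w - z) / (w - x) + (z - x) / (w - x) = 1 := by field_simp; ring
    have h := hU.2 (mem_univ x) (mem_univ w) hs0 ht0 hst
    simp only [smul_eq_mul] at h
    have hcomb : (w - z) / (w - x) * x + (z - x) / (w - x) * w = z := by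
      field_simp; ring
    rw [hcomb] at h
    have h' : (w - z) * U x + (z - x) * U w ≤ (w - x) * U z := by
      have h2 := mul_le_mul_of_nonneg_right h hwx.le
      calc (w - z) * U x + (z - x) * U w
          = ((w - z) / (w - x) * U x + (z - x) / (w - x) * U w) * (w - x) := by
            field_simp
        _ ≤ U z * (w - x) := h2
        _ = (w - x) * U z := by ring
    rw [hgoal, le_div_iff₀ hzx]
    nlinarith [h']

/-- If a continuous function `I` is strictly below its (finite-valued) concave envelope `U`
on an open interval `(a,b)`, then `U` is affine on `(a,b)`. -/
theorem concave_envelope_affine_on_gap (I U : ℝ → ℝ) (hI : Continuous I)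
    (hU : ∀ z, IsGLB {y : ℝ | ∃ Φ : ℝ → ℝ, ConcaveOn ℝ univ Φ ∧ (∀ x, I x ≤ Φ x) ∧ Φ z = y}
      (U z))
    (a b : ℝ) (hab : a < b)
    (hlt : ∀ z ∈ Ioo a b, I z < U z) :
    ∃ α β : ℝ, ∀ z ∈ Ioo a b, U z = α * z + β := by
  have hUle : ∀ Φ : ℝ → ℝ, ConcaveOn ℝ univ Φ → (∀ x, I x ≤ Φ x) → ∀ z, U z ≤ Φ z :=
    fun Φ hc hge z => (hU z).1 ⟨Φ, hc, hge, rfl⟩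
  have hIU : ∀ z, I z ≤ U z := fun z =>
    (hU z).2 (by rintro y ⟨Φ, hc, hge, rfl⟩; exact hge z)
  have hUconc : ConcaveOn ℝ univ U := by
    refine ⟨convex_univ, ?_⟩
    intro p _ q _ s t hs ht hst
    apply (hU _).2
    rintro y ⟨Φ, hc, hge, rfl⟩
    calc s • U p + t • U q ≤ s • Φ p + t • Φ q := by
          simp only [smul_eq_mul]
          gcongr
          · exact hUle Φ hc hge p
          · exact hUle Φ hc hge q
      _ ≤ Φ (s • p + t • q) := hc.2 (mem_univ p) (mem_univ q) hs ht hst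
  have hUcont : Continuous U := by
    rw [← continuousOn_univ]
    exact hUconc.continuousOn isOpen_univ
  -- key : U agrees with its chord on any [x,z] ⊆ (a,b)
  have key : ∀ x z, x ∈ Ioo a b → z ∈ Ioo a b → x < z →
      ∀ w ∈ Icc x z, U w = U x + (U z - U x) / (z - x) * (w - x) := by
    intro x z hx hz hxz
    set s := (U z - U x) / (z - x) with hsdef
    set g : ℝ → ℝ := fun w => U x + s * (w - x) with hg
    have hgcont : Continuous g := by fun_prop
    have hsub : Icc x z ⊆ Ioo a b := fun w hw =>
      ⟨lt_of_lt_of_le hx.1 hw.1, lt_of_le_of_lt hw.2 hz.2⟩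
    have hne : (Icc x z).Nonempty := nonempty_Icc.2 hxz.le
    obtain ⟨m0, hm0, hmin⟩ := isCompact_Icc.exists_isMinOn hne ((hUcont.sub hI).continuousOn)
    set δ := U m0 - I m0 with hδdef
    have hδ : 0 < δ := sub_pos.2 (hlt m0 (hsub hm0))
    obtain ⟨m, hm, hmax⟩ := isCompact_Icc.exists_isMaxOn hne ((hUcont.sub hgcont).continuousOn)
    set M := U m - g m with hMdef
    have hUg : ∀ w ∈ Icc x z, U w ≤ g w := by
      by_cases hM : M ≤ 0
      · intro w hw
        have h2 : U w - g w ≤ M := hmax hw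
        linarith
      · push_neg at hM
        exfalso
        set η := min δ M with hηdef
        have hη : 0 < η := lt_min hδ hM
        have hc : 0 ≤ M - η := sub_nonneg.2 (min_le_right _ _)
        set V : ℝ → ℝ := fun w => min (U w) (g w + (M - η)) with hV
        have haff : ConcaveOn ℝ univ (fun w => s * w + (U x - s * x + (M - η))) :=
          affine_concave _ _
        have he : ∀ w, g w + (M - η) = s * w + (U x - s * x + (M - η)) := by
          intro w; simp only [hg]; ring
        have hVconc : ConcaveOn ℝ univ V := by
          refine ⟨convex_univ, ?_⟩
          intro p _ q _ t u ht hu htu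
          have h1 := hUconc.2 (mem_univ p) (mem_univ q) ht hu htu
          have h2 := haff.2 (mem_univ p) (mem_univ q) ht hu htu
          simp only [smul_eq_mul] at h1 h2 ⊢
          apply le_min
          · refine le_trans ?_ h1
            gcongr
            · exact min_le_left _ _
            · exact min_le_left _ _
          · rw [he]
            refine le_trans ?_ h2
            have e1 := he p
            have e2 := he q
            gcongr
            · exact le_trans (min_le_right _ _) (le_of_eq e1)
            · exact le_trans (min_le_right _ _) (le_of_eq e2)
        have hVI : ∀ w, I w ≤ V w := by
          intro w
          apply le_min (hIU w)
          by_cases hw : w ∈ Icc x z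
          · have h2 : U w - g w ≤ M := hmax hw
            have h3 : δ ≤ U w - I w := hmin hw
            have h4 : η ≤ δ := min_le_left _ _
            linarith
          · have hw' : w ∉ Ioo x z := fun h => hw (Ioo_subset_Icc_self h)
            have h5 := le_chord_of_concave hUconc hxz hw'
            have h6 : U w ≤ g w := h5
            linarith [hIU w]
        have h7 : U m ≤ V m := hUle V hVconc hVI m
        have h8 : V m ≤ g m + (M - η) := min_le_right _ _
        linarith
    intro w hw
    have h1 := chord_le_of_concave hUconc hxz hw
    have h2 := hUg w hw
    simp only [hg] at h2
    linarith
  -- assemble the affine function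
  set p := a + (b - a) / 3 with hp
  set q := a + 2 * (b - a) / 3 with hq
  clear_value p q
  have hpab : p ∈ Ioo a b := by
    constructor <;> simp only [hp] <;> linarith
  have hqab : q ∈ Ioo a b := by
    constructor <;> simp only [hq] <;> linarith
  have hpq : p < q := by simp only [hp, hq]; linarith
  refine ⟨(U q - U p) / (q - p), U p - (U q - U p) / (q - p) * p, ?_⟩
  intro w hw
  set x := (a + min w p) / 2 with hx
  set z := (max w q + b) / 2 with hz
  clear_value x z
  have hminw : a < min w p := lt_min hw.1 hpab.1
  have hmaxw : max w q < b := max_lt hw.2 hqab.2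
  have hxab : x ∈ Ioo a b := by
    constructor
    · simp only [hx]; linarith
    · have : min w p ≤ w := min_le_left _ _
      simp only [hx]; linarith [hw.2]
  have hzab : z ∈ Ioo a b := by
    constructor
    · have : w ≤ max w q := le_max_left _ _
      simp only [hz]; linarith [hw.1]
    · simp only [hz]; linarith
  have hxw : x < w := by
    have : min w p ≤ w := min_le_left _ _
    simp only [hx]; linarith [hw.1]
  have hxp : x < p := by
    have : min w p ≤ p := min_le_right _ _
    simp only [hx]; linarith [hminw]
  have hwz : w < z := by
    have : w ≤ max w q := le_max_left _ _
    simp only [hz]; linarith [hw.2]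
  have hqz : q < z := by
    have : q ≤ max w q := le_max_right _ _
    simp only [hz]; linarith [hmaxw]
  have hxz : x < z := lt_trans hxw hwz
  have hUw := key x z hxab hzab hxz w ⟨hxw.le, hwz.le⟩
  have hUp := key x z hxab hzab hxz p ⟨hxp.le, (lt_trans hpq hqz).le⟩
  have hUq := key x z hxab hzab hxz q ⟨(lt_trans hxp hpq).le, hqz.le⟩
  set s := (U z - U x) / (z - x) with hsdef
  have hα : (U q - U p) / (q - p) = s := by
    rw [hUp, hUq]
    have : q - p ≠ 0 := by linarith
    field_simp
    ring
  rw [hα, hUw, hUp]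
  ring
end

section
/- Let I : ℝ → ℝ be twice continuously differentiable and let U be its concave envelope, assumed finite valued. Suppose x₀ ∈ ℝ satisfies I(x₀) < U(x₀) < ∞, and there exists x̂ < x₀ with U(x̂) = I(x̂) and I < U on (x̂, x₀). Then U is differentiable at x̂ with U'(x̂) = I'(x̂), and I''(x̂) ≤ 0. -/
open Set Filter Asymptotics Topology

/-- At a left contact point `xh` of a `C²` function `I` with its concave envelope `U`,
adjacent to an interval where `I < U`, the envelope is differentiable with
`U'(xh) = I'(xh)` and `I''(xh) ≤ 0`. -/
theorem concave_envelope_contact_point (I U : ℝ → ℝ) (hI : ContDiff ℝ 2 I)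
    (hU : ∀ z, IsGLB {y : ℝ | ∃ Φ : ℝ → ℝ, ConcaveOn ℝ univ Φ ∧ (∀ x, I x ≤ Φ x) ∧ Φ z = y}
      (U z))
    (x₀ xh : ℝ) (h0 : I x₀ < U x₀) (hx : xh < x₀)
    (htouch : U xh = I xh) (hlt : ∀ z ∈ Ioo xh x₀, I z < U z) :
    HasDerivAt U (deriv I xh) xh ∧ deriv (deriv I) xh ≤ 0 := by
  set d := deriv I xh with hd
  have hIdiff : Differentiable ℝ I := hI.differentiable (by norm_num)
  have hIxh : HasDerivAt I d xh := (hIdiff xh).hasDerivAt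
  -- U ≥ I
  have hUI : ∀ z, I z ≤ U z := by
    intro z
    refine (hU z).2 ?_
    rintro y ⟨Φ, hΦ, hΦI, rfl⟩
    exact hΦI z
  -- U is concave
  have hUconc : ConcaveOn ℝ univ U := by
    refine ⟨convex_univ, ?_⟩
    intro x _ y _ a b ha hb hab
    refine (hU (a • x + b • y)).2 ?_
    rintro w ⟨Φ, hΦ, hΦI, rfl⟩
    have hx' : U x ≤ Φ x := (hU x).1 ⟨Φ, hΦ, hΦI, rfl⟩
    have hy' : U y ≤ Φ y := (hU y).1 ⟨Φ, hΦ, hΦI, rfl⟩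
    calc a • U x + b • U y ≤ a • Φ x + b • Φ y :=
          add_le_add (smul_le_smul_of_nonneg_left hx' ha)
            (smul_le_smul_of_nonneg_left hy' hb)
      _ ≤ Φ (a • x + b • y) := hΦ.2 (mem_univ x) (mem_univ y) ha hb hab
  -- slope limits of I at xh
  have hTI : Tendsto (slope I xh) (𝓝[≠] xh) (𝓝 d) := hasDerivAt_iff_tendsto_slope.mp hIxh
  have hTIl : Tendsto (slope I xh) (𝓝[<] xh) (𝓝 d) :=
    hTI.mono_left (nhdsWithin_mono _ fun a ha => ne_of_lt ha)
  have hTIr : Tendsto (slope I xh) (𝓝[>] xh) (𝓝 d) :=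
    hTI.mono_left (nhdsWithin_mono _ fun a ha => ne_of_gt ha)
  -- slope bound on the right of xh
  have hub : ∀ b, xh < b → (U b - U xh) / (b - xh) ≤ d := by
    intro b hb
    refine ge_of_tendsto hTIl (eventually_nhdsWithin_of_forall ?_)
    intro a ha
    rw [mem_Iio] at ha
    have h1 : (U b - U xh) / (b - xh) ≤ (U xh - U a) / (xh - a) :=
      hUconc.slope_anti_adjacent (mem_univ a) (mem_univ b) ha hb
    have h2 : (U xh - U a) / (xh - a) ≤ (I xh - I a) / (xh - a) := by
      gcongr <;> linarith [hUI a, htouch.le, htouch.ge]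
    have h3 : slope I xh a = (I xh - I a) / (xh - a) := by
      rw [slope_comm, slope_def_field]
    rw [h3]; exact h1.trans h2
  -- slope bound on the left of xh
  have hlb : ∀ a, a < xh → d ≤ (U xh - U a) / (xh - a) := by
    intro a ha
    refine le_of_tendsto hTIr (eventually_nhdsWithin_of_forall ?_)
    intro b hb
    rw [mem_Ioi] at hb
    have h1 : (U b - U xh) / (b - xh) ≤ (U xh - U a) / (xh - a) :=
      hUconc.slope_anti_adjacent (mem_univ a) (mem_univ b) ha hb
    have h2 : (I b - I xh) / (b - xh) ≤ (U b - U xh) / (b - xh) := by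
      gcongr <;> linarith [hUI b, htouch.le, htouch.ge]
    have h3 : slope I xh b = (I b - I xh) / (b - xh) := slope_def_field I xh b
    rw [h3]; exact h2.trans h1
  -- the supporting line estimate
  have key : ∀ x, U x ≤ U xh + d * (x - xh) := by
    intro x
    rcases lt_trichotomy x xh with h | h | h
    · have h1 := hlb x h
      have h2 : d * (xh - x) ≤ U xh - U x := by
        rw [le_div_iff₀ (by linarith)] at h1; linarith
      nlinarith [h2]
    · subst h; simp
    · have h1 := hub x h
      have h2 : U x - U xh ≤ d * (x - xh) := by
        rw [div_le_iff₀ (by linarith)] at h1; linarith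
      linarith
  constructor
  · -- differentiability of U at xh
    rw [hasDerivAt_iff_isLittleO]
    have hIo : (fun x' : ℝ => I x' - I xh - (x' - xh) • d) =o[nhds xh] fun x' => x' - xh :=
      hasDerivAt_iff_isLittleO.mp hIxh
    refine IsBigO.trans_isLittleO (isBigO_of_le _ ?_) hIo
    intro x
    have hA : U x - U xh - (x - xh) • d ≤ 0 := by
      have := key x; simp only [smul_eq_mul]; linarith
    have hB : I x - I xh - (x - xh) • d ≤ 0 := by
      have := key x; have := hUI x; simp only [smul_eq_mul]; linarith [htouch]
    have hBA : I x - I xh - (x - xh) • d ≤ U x - U xh - (x - xh) • d := by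
      have := hUI x; simp only [smul_eq_mul]; linarith [htouch]
    rw [Real.norm_eq_abs, Real.norm_eq_abs, abs_of_nonpos hA, abs_of_nonpos hB]
    linarith
  · -- second derivative nonpositive
    by_contra hpos
    push_neg at hpos
    have hfdiff : Differentiable ℝ (deriv I) := by
      have h2 : ContDiff ℝ (1 + 1 : ℕ) I := by norm_num; exact hI
      exact (contDiff_succ_iff_deriv (𝕜 := ℝ) (f := I) (n := 1) |>.mp (by rw [one_add_one_eq_two]; exact hI)).2.2.differentiable one_ne_zero
    have hfd : HasDerivAt (deriv I) (deriv (deriv I) xh) xh := (hfdiff xh).hasDerivAt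
    have hT : Tendsto (slope (deriv I) xh) (𝓝[>] xh) (𝓝 (deriv (deriv I) xh)) :=
      (hasDerivAt_iff_tendsto_slope.mp hfd).mono_left
        (nhdsWithin_mono _ fun a ha => ne_of_gt ha)
    have hev : ∀ᶠ x in 𝓝[>] xh, 0 < slope (deriv I) xh x :=
      hT.eventually (eventually_gt_nhds hpos)
    have hev2 : {x | d < deriv I x} ∈ 𝓝[>] xh := by
      filter_upwards [hev, self_mem_nhdsWithin] with x hx1 hx2
      rw [mem_Ioi] at hx2
      rw [slope_def_field] at hx1
      have := (div_pos_iff.mp hx1)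
      rcases this with ⟨h1, _⟩ | ⟨_, h2⟩
      · simpa using by linarith [h1]
      · linarith
    obtain ⟨u, hu, hsub⟩ := mem_nhdsGT_iff_exists_Ioo_subset.mp hev2
    rw [mem_Ioi] at hu
    set g : ℝ → ℝ := fun x => I x - (I xh + d * (x - xh)) with hg
    have hg' : ∀ x, HasDerivAt g (deriv I x - d) x := by
      intro x
      have h1 : HasDerivAt (fun x : ℝ => I xh + d * (x - xh)) d x := by
        simpa using (((hasDerivAt_id x).sub_const xh).const_mul d).const_add (I xh)
      exact ((hIdiff x).hasDerivAt).sub h1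
    have hmono : StrictMonoOn g (Icc xh u) := by
      refine strictMonoOn_of_deriv_pos (convex_Icc _ _) ?_ ?_
      · exact (hIdiff.continuous.sub (by continuity)).continuousOn
      · intro x hxmem
        rw [interior_Icc] at hxmem
        rw [(hg' x).deriv]
        exact sub_pos.mpr (hsub hxmem)
    have hm : (xh + u) / 2 ∈ Ioo xh u := by constructor <;> [linarith; linarith]
    have hlt2 : g xh < g ((xh + u) / 2) :=
      hmono (left_mem_Icc.mpr hu.le) ⟨hm.1.le, hm.2.le⟩ hm.1
    have hgxh : g xh = 0 := by simp [hg]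
    have hgm : g ((xh + u) / 2) ≤ 0 := by
      have h1 := hUI ((xh + u) / 2)
      have h2 := key ((xh + u) / 2)
      simp only [hg]
      linarith [htouch]
    linarith
end

section
/- Let I_F : ℝ → ℝ be concave, C², nondecreasing with I_F'(x) ∈ [0,1], satisfying (σ²/2)I_F'' + (μ - F)I_F' - qI_F = -F on ℝ. Let ψ_q, φ solve the ODEs (L-q)u=0 and (L_F-q)u=0 as above, with b̂ the inflection point of ψ_q, φ strictly convex and decreasing. If I_F'(0) - I_F(0)φ'(0+) > 1, then the equation φ(b)/φ'(b) - ψ_q(b)/ψ_q'(b) = I_F'(b)·φ(b)/φ'(b) - I_F(b) has a solution b* in (0, b̂]. -/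
open Set

open Filter Topology

private lemma aux_deriv_nonneg_of_right {g : ℝ → ℝ} {x g' : ℝ} (hg : HasDerivAt g g' x)
    (h : ∀ t, x < t → g x ≤ g t) : 0 ≤ g' := by
  have ht := (hasDerivAt_iff_tendsto_slope.mp hg).mono_left
    (nhdsWithin_mono _ (fun t (ht : t ∈ Ioi x) => (ht.ne' : t ≠ x)))
  refine ge_of_tendsto ht ?_
  filter_upwards [self_mem_nhdsWithin] with t ht'
  have hxt : x < t := ht'
  rw [slope_def_field]
  exact div_nonneg (by linarith [h t hxt]) (by linarith)

private lemma aux_deriv_nonpos_of_right {g : ℝ → ℝ} {x g' : ℝ} (hg : HasDerivAt g g' x)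
    (h : ∀ t, x < t → g t ≤ g x) : g' ≤ 0 := by
  have := aux_deriv_nonneg_of_right hg.neg (fun t ht => by simpa using h t ht)
  linarith

/-- Existence of an optimal refraction level: if `I_F'(0) - I_F(0) φ'(0+) > 1`, the
smooth-fit equation `φ(b)/φ'(b) - ψ(b)/ψ'(b) = I_F'(b) φ(b)/φ'(b) - I_F(b)` has a
solution `b* ∈ (0, b̂]`. -/
theorem exists_optimal_barrier (q : ℝ) (hq : 0 < q) (μ F σ : ℝ → ℝ)
    (hμ : ConcaveOn ℝ univ μ) (hμ0 : 0 < μ 0) (hμ' : deriv μ 0 < q)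
    (hF : ConcaveOn ℝ univ F) (hFmono : Monotone F) (hF0 : 0 ≤ F 0)
    (hσpos : ∀ x, 0 < σ x)
    (IF ψ φ : ℝ → ℝ)
    (hIFC : ContDiff ℝ 2 IF) (hIFconc : ConcaveOn ℝ univ IF)
    (hIF' : ∀ x, deriv IF x ∈ Icc (0:ℝ) 1)
    (hIFode : ∀ x, σ x ^ 2 / 2 * iteratedDeriv 2 IF x
        + (μ x - F x) * deriv IF x - q * IF x = -F x)
    (hψC : ContDiffOn ℝ 2 ψ (Ioi 0))
    (hψode : ∀ x > (0:ℝ),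
      σ x ^ 2 / 2 * iteratedDeriv 2 ψ x + μ x * deriv ψ x - q * ψ x = 0)
    (hψ0 : ψ 0 = 0) (hψ'0 : deriv ψ 0 = 1) (hψ' : ∀ x > (0:ℝ), 0 < deriv ψ x)
    (bh : ℝ) (hbh : 0 < bh)
    (hconc : ConcaveOn ℝ (Ioo 0 bh) ψ) (hconv : ConvexOn ℝ (Ioi bh) ψ)
    (hinfl : ψ bh / deriv ψ bh = μ bh / q)
    (hφC : ContDiffOn ℝ 2 φ (Ioi 0))
    (hφode : ∀ x > (0:ℝ),
      σ x ^ 2 / 2 * iteratedDeriv 2 φ x + (μ x - F x) * deriv φ x - q * φ x = 0)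
    (hφ0 : φ 0 = 1) (hφpos : ∀ x ≥ (0:ℝ), 0 < φ x) (hφ' : ∀ x > (0:ℝ), deriv φ x < 0)
    (hφconv : StrictConvexOn ℝ (Ioi 0) φ)
    (hcond : deriv IF 0 - IF 0 * deriv φ 0 > 1) :
    ∃ b ∈ Ioc 0 bh,
      φ b / deriv φ b - ψ b / deriv ψ b = deriv IF b * (φ b / deriv φ b) - IF b := by
  -- basic differentiability
  have hψdiff : ∀ x ∈ Ioi (0:ℝ), DifferentiableAt ℝ ψ x := fun x hx =>
    (hψC.differentiableOn (by norm_num)).differentiableAt (isOpen_Ioi.mem_nhds hx)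
  have hφdiff : ∀ x ∈ Ioi (0:ℝ), DifferentiableAt ℝ φ x := fun x hx =>
    (hφC.differentiableOn (by norm_num)).differentiableAt (isOpen_Ioi.mem_nhds hx)
  have hIF0le : deriv IF 0 ≤ 1 := (hIF' 0).2
  have hA0 : deriv φ 0 ≠ 0 := by
    intro h; rw [h] at hcond; simp at hcond; linarith
  have hφd0 : DifferentiableAt ℝ φ 0 := by
    by_contra h; exact hA0 (deriv_zero_of_not_differentiableAt h)
  have hψd0 : DifferentiableAt ℝ ψ 0 := by
    by_contra h
    rw [deriv_zero_of_not_differentiableAt h] at hψ'0; norm_num at hψ'0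
  set A := deriv φ 0 with hAdef
  have hsub : Ioi (0:ℝ) ⊆ {(0:ℝ)}ᶜ := fun t ht => (ne_of_gt ht)
  -- slope of φ at 0 tends to A from the right
  have hslφ : Tendsto (slope φ 0) (𝓝[>] 0) (𝓝 A) :=
    (hasDerivAt_iff_tendsto_slope.mp hφd0.hasDerivAt).mono_left (nhdsWithin_mono _ hsub)
  have hhalf : Tendsto (fun ε : ℝ => ε/2) (𝓝[>] (0:ℝ)) (𝓝[>] (0:ℝ)) := by
    rw [tendsto_nhdsWithin_iff]
    constructor
    · have : Tendsto (fun ε : ℝ => ε/2) (𝓝 (0:ℝ)) (𝓝 (0/2)) :=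
        (continuous_id.div_const 2).tendsto 0
      simpa using this.mono_left nhdsWithin_le_nhds
    · filter_upwards [self_mem_nhdsWithin] with t ht
      exact div_pos (show (0:ℝ) < t from ht) (by norm_num : (0:ℝ) < 2)
  have hdouble : Tendsto (fun ε : ℝ => 2*ε) (𝓝[>] (0:ℝ)) (𝓝[>] (0:ℝ)) := by
    rw [tendsto_nhdsWithin_iff]
    constructor
    · have : Tendsto (fun ε : ℝ => 2*ε) (𝓝 (0:ℝ)) (𝓝 (2*0)) :=
        (continuous_const.mul continuous_id).tendsto 0
      simpa using this.mono_left nhdsWithin_le_nhds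
    · filter_upwards [self_mem_nhdsWithin] with t ht
      have ht' : (0:ℝ) < t := ht
      exact mem_Ioi.mpr (by positivity)
  have hLb : Tendsto (fun ε => 2*(slope φ 0 ε) - slope φ 0 (ε/2)) (𝓝[>] (0:ℝ)) (𝓝 A) := by
    have h := (hslφ.const_mul 2).sub (hslφ.comp hhalf)
    have : 2*A - A = A := by ring
    rw [this] at h
    exact h
  have hUb : Tendsto (fun ε => 2*(slope φ 0 (2*ε)) - slope φ 0 ε) (𝓝[>] (0:ℝ)) (𝓝 A) := by
    have h := ((hslφ.comp hdouble).const_mul 2).sub hslφ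
    have : 2*A - A = A := by ring
    rw [this] at h
    exact h
  have hφ'tend : Tendsto (deriv φ) (𝓝[>] (0:ℝ)) (𝓝 A) := by
    apply tendsto_of_tendsto_of_tendsto_of_le_of_le' hLb hUb
    · filter_upwards [self_mem_nhdsWithin] with ε hε
      have hε0 : (0:ℝ) < ε := hε
      have hmem : ε/2 ∈ Ioi (0:ℝ) := by simpa using half_pos hε0
      have h1 : slope φ (ε/2) ε ≤ deriv φ ε :=
        hφconv.convexOn.slope_le_deriv hmem hε (by linarith) (hφdiff ε hε)
      have hne : ε ≠ 0 := hε0.ne'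
      have hne2 : ε - ε/2 ≠ 0 := by
        intro h; apply hne; linarith
      have heq : 2*(slope φ 0 ε) - slope φ 0 (ε/2) = slope φ (ε/2) ε := by
        simp only [slope_def_field, sub_zero]
        rw [show ε - ε/2 = ε/2 by ring,
            show 2*((φ ε - φ 0)/ε) = (φ ε - φ 0)/(ε/2) by rw [div_div_eq_mul_div]; ring,
            div_sub_div_same]
        congr 1
        ring
      rw [heq]; exact h1
    · filter_upwards [self_mem_nhdsWithin] with ε hε
      have hε0 : (0:ℝ) < ε := hε
      have hmem : 2*ε ∈ Ioi (0:ℝ) := by simpa using by positivity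
      have h1 : deriv φ ε ≤ slope φ ε (2*ε) :=
        hφconv.convexOn.deriv_le_slope hε hmem (by linarith) (hφdiff ε hε)
      have hne : ε ≠ 0 := hε0.ne'
      have hne2 : 2*ε - ε ≠ 0 := by
        intro h; apply hne; linarith
      have heq : 2*(slope φ 0 (2*ε)) - slope φ 0 ε = slope φ ε (2*ε) := by
        simp only [slope_def_field, sub_zero]
        rw [show 2*ε - ε = ε by ring,
            show 2*((φ (2*ε) - φ 0)/(2*ε)) = (φ (2*ε) - φ 0)/ε by
              rw [show (2:ℝ)*ε = ε*2 by ring, ← div_div]; ring,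
            div_sub_div_same]
        congr 1
        ring
      rw [heq]; exact h1
  have hAneg : A < 0 := by
    have hle : A ≤ 0 := le_of_tendsto hφ'tend (by
      filter_upwards [self_mem_nhdsWithin] with t ht
      exact (hφ' t ht).le)
    exact lt_of_le_of_ne hle hA0
  have hφcont0 : Tendsto φ (𝓝[>] (0:ℝ)) (𝓝 1) := by
    have := hφd0.continuousAt.tendsto
    rw [hφ0] at this
    exact this.mono_left nhdsWithin_le_nhds
  have hXtend : Tendsto (fun b => φ b / deriv φ b) (𝓝[>] (0:ℝ)) (𝓝 (1/A)) :=
    hφcont0.div hφ'tend hA0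
  -- ψ side
  have hψcont0 : Tendsto ψ (𝓝[>] (0:ℝ)) (𝓝 0) := by
    have := hψd0.continuousAt.tendsto
    rw [hψ0] at this
    exact this.mono_left nhdsWithin_le_nhds
  have hslψ : Tendsto (slope ψ 0) (𝓝[>] (0:ℝ)) (𝓝 1) := by
    have := (hasDerivAt_iff_tendsto_slope.mp hψd0.hasDerivAt).mono_left (nhdsWithin_mono _ hsub)
    rwa [hψ'0] at this
  set b0 := bh/2 with hb0def
  have hb0 : 0 < b0 := half_pos hbh
  have hb0bh : b0 < bh := by simp only [hb0def]; linarith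
  have hψmono : StrictMonoOn ψ (Ioi (0:ℝ)) := by
    apply strictMonoOn_of_deriv_pos (convex_Ioi 0) hψC.continuousOn
    intro x hx
    rw [interior_Ioi] at hx
    exact hψ' x hx
  have hψb0pos : 0 < ψ b0 := by
    have hev1 : ∀ᶠ t in 𝓝[>] (0:ℝ), 0 < slope ψ 0 t :=
      hslψ.eventually (eventually_gt_nhds zero_lt_one)
    have hev2 : ∀ᶠ t in 𝓝[>] (0:ℝ), t < b0 :=
      eventually_nhdsWithin_of_eventually_nhds (eventually_lt_nhds hb0)
    obtain ⟨t, h1, h2, h3⟩ := (hev1.and (hev2.and self_mem_nhdsWithin)).exists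
    have ht0 : (0:ℝ) < t := h3
    have : 0 < ψ t := by
      rw [slope_def_field, hψ0, sub_zero, sub_zero] at h1
      have h4 := mul_pos h1 ht0
      rwa [div_mul_cancel₀ _ ht0.ne'] at h4
    calc (0:ℝ) < ψ t := this
      _ < ψ b0 := hψmono ht0 hb0 h2
  set c := ψ b0 / (2*b0) with hcdef
  have hc : 0 < c := by positivity
  have hslb0 : Tendsto (fun ε => slope ψ ε b0) (𝓝[>] (0:ℝ)) (𝓝 (2*c)) := by
    have h1 : Tendsto (fun ε => (ψ b0 - ψ ε)/(b0 - ε)) (𝓝[>] (0:ℝ)) (𝓝 ((ψ b0 - 0)/(b0 - 0))) := by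
      apply Tendsto.div (tendsto_const_nhds.sub hψcont0)
        (tendsto_const_nhds.sub (tendsto_id.mono_left nhdsWithin_le_nhds))
      simpa using hb0.ne'
    have h2 : (ψ b0 - 0)/(b0 - 0) = 2*c := by
      rw [hcdef, sub_zero, sub_zero, mul_div_assoc', mul_div_mul_left _ _ (by norm_num : (2:ℝ) ≠ 0)]
    rw [h2] at h1
    refine h1.congr (fun ε => ?_)
    rw [slope_def_field]
  have hψ'lb : ∀ᶠ ε in 𝓝[>] (0:ℝ), c ≤ deriv ψ ε := by
    have hev1 : ∀ᶠ ε in 𝓝[>] (0:ℝ), c < slope ψ ε b0 :=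
      hslb0.eventually (eventually_gt_nhds (by linarith))
    have hev2 : ∀ᶠ ε in 𝓝[>] (0:ℝ), ε < b0 :=
      eventually_nhdsWithin_of_eventually_nhds (eventually_lt_nhds hb0)
    filter_upwards [hev1, hev2, self_mem_nhdsWithin] with ε h1 h2 h3
    have hε0 : (0:ℝ) < ε := h3
    have hmem1 : ε ∈ Ioo (0:ℝ) bh := ⟨hε0, lt_trans h2 hb0bh⟩
    have hmem2 : b0 ∈ Ioo (0:ℝ) bh := ⟨hb0, hb0bh⟩
    have := hconc.slope_le_deriv hmem1 hmem2 h2 (hψdiff ε hε0)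
    linarith
  have hψpos' : ∀ᶠ ε in 𝓝[>] (0:ℝ), 0 ≤ ψ ε := by
    have hev1 : ∀ᶠ t in 𝓝[>] (0:ℝ), 0 < slope ψ 0 t :=
      hslψ.eventually (eventually_gt_nhds zero_lt_one)
    filter_upwards [hev1, self_mem_nhdsWithin] with t h1 h3
    have ht0 : (0:ℝ) < t := h3
    rw [slope_def_field, hψ0, sub_zero, sub_zero] at h1
    have h4 := mul_pos h1 ht0
    rw [div_mul_cancel₀ _ ht0.ne'] at h4
    exact h4.le
  have hψψ' : Tendsto (fun ε => ψ ε / deriv ψ ε) (𝓝[>] (0:ℝ)) (𝓝 0) := by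
    apply tendsto_of_tendsto_of_tendsto_of_le_of_le' (g := fun _ => (0:ℝ))
      (h := fun ε => ψ ε / c) tendsto_const_nhds
    · simpa using hψcont0.div_const c
    · filter_upwards [hψpos', hψ'lb, self_mem_nhdsWithin] with ε h1 h2 h3
      exact div_nonneg h1 (by linarith [hψ' ε h3])
    · filter_upwards [hψpos', hψ'lb, self_mem_nhdsWithin] with ε h1 h2 h3
      exact div_le_div_of_nonneg_left h1 hc h2
  -- deriv IF facts
  have h2eq : (2 : WithTop ℕ∞) = 1 + 1 := by norm_num
  have hIFC' : ContDiff ℝ 1 (deriv IF) := by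
    have := contDiff_succ_iff_deriv.mp (h2eq ▸ hIFC)
    exact this.2.2
  have hIF'cont : Continuous (deriv IF) := hIFC'.continuous
  have htend_dIF : Tendsto (deriv IF) (𝓝[>] (0:ℝ)) (𝓝 (deriv IF 0)) :=
    (hIF'cont.tendsto 0).mono_left nhdsWithin_le_nhds
  have htend_IF : Tendsto IF (𝓝[>] (0:ℝ)) (𝓝 (IF 0)) :=
    (hIFC.continuous.tendsto 0).mono_left nhdsWithin_le_nhds
  -- main function
  set G : ℝ → ℝ :=
    fun b => φ b / deriv φ b - ψ b / deriv ψ b - (deriv IF b * (φ b / deriv φ b) - IF b)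
    with hGdef
  set L : ℝ := 1/A - 0 - (deriv IF 0 * (1/A) - IF 0) with hLdef
  have hGtend : Tendsto G (𝓝[>] (0:ℝ)) (𝓝 L) :=
    (hXtend.sub hψψ').sub ((htend_dIF.mul hXtend).sub htend_IF)
  have hL : 0 < L := by
    have hnum : 1 - deriv IF 0 + IF 0 * A < 0 := by linarith
    have hLform : L = (1 - deriv IF 0 + IF 0 * A)/A := by
      rw [hLdef]; field_simp; ring
    rw [hLform]
    exact div_pos_of_neg_of_neg hnum hAneg
  -- find a point ε with G ε > 0, 0 < ε < bh
  have hevG : ∀ᶠ b in 𝓝[>] (0:ℝ), 0 < G b := hGtend.eventually (eventually_gt_nhds hL)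
  have hevbh : ∀ᶠ b in 𝓝[>] (0:ℝ), b < bh :=
    eventually_nhdsWithin_of_eventually_nhds (eventually_lt_nhds hbh)
  obtain ⟨ε, hGε, hεbh, hε0'⟩ := (hevG.and (hevbh.and self_mem_nhdsWithin)).exists
  have hε0 : (0:ℝ) < ε := hε0'
  -- second derivative signs at bh
  have hbh' : bh ∈ Ioi (0:ℝ) := hbh
  have hφC1 : ContDiffOn ℝ 1 (deriv φ) (Ioi 0) :=
    hφC.deriv_of_isOpen isOpen_Ioi (by norm_num)
  have hφ'diffbh : DifferentiableAt ℝ (deriv φ) bh :=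
    (hφC1.differentiableOn (by norm_num)).differentiableAt (isOpen_Ioi.mem_nhds hbh')
  have hφ'' : 0 ≤ iteratedDeriv 2 φ bh := by
    rw [iteratedDeriv_succ, iteratedDeriv_one]
    apply aux_deriv_nonneg_of_right hφ'diffbh.hasDerivAt
    intro t ht
    exact ((hφconv.strictMonoOn_deriv hφdiff) hbh' (lt_trans hbh ht) ht).le
  have hIF'' : iteratedDeriv 2 IF bh ≤ 0 := by
    rw [iteratedDeriv_succ, iteratedDeriv_one]
    apply aux_deriv_nonpos_of_right ((hIFC'.differentiable (by norm_num)) bh).hasDerivAt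
    intro t ht
    exact (hIFconc.antitoneOn_deriv
      (fun x _ => (hIFC.differentiable (by norm_num)) x) (mem_univ bh) (mem_univ t) ht.le)
  -- boundary sign
  have hGbh : G bh ≤ 0 := by
    have hpφ : 0 < φ bh := hφpos bh hbh.le
    have hp' : deriv φ bh < 0 := hφ' bh hbh
    have hσ2 : 0 ≤ σ bh^2/2 * iteratedDeriv 2 φ bh :=
      mul_nonneg (by positivity) hφ''
    have hode := hφode bh hbh
    have h1 : q * (φ bh / deriv φ bh) ≤ μ bh - F bh := by
      rw [show q * (φ bh / deriv φ bh) = (q * φ bh)/(deriv φ bh) by ring]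
      rw [div_le_iff_of_neg hp']
      nlinarith [hσ2, hode]
    have hd := hIF' bh
    have h2 : q * IF bh ≤ (μ bh - F bh) * deriv IF bh + F bh := by
      have hσ2' : σ bh^2/2 * iteratedDeriv 2 IF bh ≤ 0 :=
        mul_nonpos_of_nonneg_of_nonpos (by positivity) hIF''
      linarith [hIFode bh]
    have hkey : q * ((1 - deriv IF bh) * (φ bh / deriv φ bh))
        ≤ (1 - deriv IF bh) * (μ bh - F bh) := by
      have h3 := mul_le_mul_of_nonneg_left h1 (by linarith [hd.2] : 0 ≤ 1 - deriv IF bh)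
      calc q * ((1 - deriv IF bh) * (φ bh / deriv φ bh))
          = (1 - deriv IF bh) * (q * (φ bh / deriv φ bh)) := by ring
        _ ≤ (1 - deriv IF bh) * (μ bh - F bh) := h3
    have hμq : q * (μ bh / q) = μ bh := by field_simp
    have hfinal : q * (φ bh / deriv φ bh - μ bh / q
        - (deriv IF bh * (φ bh / deriv φ bh) - IF bh)) ≤ 0 := by
      have e : q * (φ bh / deriv φ bh - μ bh / q
          - (deriv IF bh * (φ bh / deriv φ bh) - IF bh))
          = q * ((1 - deriv IF bh) * (φ bh / deriv φ bh)) + q * IF bh - q * (μ bh / q) := by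
        ring
      rw [e, hμq]
      have hid : (1 - deriv IF bh) * (μ bh - F bh)
          + ((μ bh - F bh) * deriv IF bh + F bh) - μ bh = 0 := by ring
      linarith [hkey, h2, hid]
    have hfinal' : q * (φ bh / deriv φ bh - μ bh / q
        - (deriv IF bh * (φ bh / deriv φ bh) - IF bh)) ≤ q * 0 := by
      rw [mul_zero]; exact hfinal
    have hY := le_of_mul_le_mul_left hfinal' hq
    rw [hGdef]
    simp only [hinfl]
    linarith [hY]
  -- continuity of G on Ioi 0
  have hcontφ' : ContinuousOn (deriv φ) (Ioi (0:ℝ)) :=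
    hφC.continuousOn_deriv_of_isOpen isOpen_Ioi (by norm_num)
  have hcontψ' : ContinuousOn (deriv ψ) (Ioi (0:ℝ)) :=
    hψC.continuousOn_deriv_of_isOpen isOpen_Ioi (by norm_num)
  have hXcont : ContinuousOn (fun b => φ b / deriv φ b) (Ioi (0:ℝ)) :=
    hφC.continuousOn.div hcontφ' (fun x hx => (hφ' x hx).ne)
  have hGcont : ContinuousOn G (Ioi (0:ℝ)) := by
    rw [hGdef]
    exact (hXcont.sub (hψC.continuousOn.div hcontψ' (fun x hx => (hψ' x hx).ne'))).sub
      ((hIF'cont.continuousOn.mul hXcont).sub hIFC.continuous.continuousOn)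
  -- IVT
  have hsubset : Icc ε bh ⊆ Ioi (0:ℝ) := fun x hx => lt_of_lt_of_le hε0 hx.1
  have hivt := intermediate_value_Icc' (le_of_lt hεbh) (hGcont.mono hsubset)
  have h0mem : (0:ℝ) ∈ Icc (G bh) (G ε) := ⟨hGbh, hGε.le⟩
  obtain ⟨b, hbmem, hGb⟩ := hivt h0mem
  refine ⟨b, ⟨lt_of_lt_of_le hε0 hbmem.1, hbmem.2⟩, ?_⟩
  rw [hGdef] at hGb
  simp only at hGb
  linarith [hGb]
end

section
/- Let q > 0, σ₀, σ₁ > 0, c₀, c₁ ∈ ℝ. Set Δ > 0 with Δ² = (σ₁² - 2c₁)² + 8qσ₁², a = (Δ - σ₁² + 2c₁)/(2σ₁²), b = 1 + Δ/σ₁², α = 2(c₀σ₁ - c₁σ₀)/σ₁², and z(x) = (σ₀+σ₁x)^{-1}. If y solves the confluent hypergeometric equation w·y''(w) + (b - w)y'(w) - a·y(w) = 0, then u(x) = z(x)^a · y(α·z(x)) solves (1/2)(σ₀+σ₁x)²u'' + (c₀+c₁x)u' - qu = 0 on x > 0. In particular, a is a root of σ₁²X² + (σ₁² - 2c₁)X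 - 2q = 0. -/
/-- Change of variables for affine volatility: with
`Δ² = (σ₁² - 2c₁)² + 8qσ₁²`, `a = (Δ - σ₁² + 2c₁)/(2σ₁²)`, `b = 1 + Δ/σ₁²`,
`α = 2(c₀σ₁ - c₁σ₀)/σ₁²`, `z = (σ₀+σ₁x)⁻¹`, if `y` solves the Kummer equation
`w y'' + (b - w) y' - a y = 0`, then `u(x) = z^a y(αz)` solves
`((σ₀+σ₁x)²/2) u'' + (c₀+c₁x) u' - q u = 0` on `x > 0`; moreover `a` is a root of
`σ₁² X² + (σ₁² - 2c₁) X - 2q = 0`. -/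
theorem kummer_change_of_variables_affine_sigma
    (q σ₀ σ₁ c₀ c₁ Δ : ℝ) (hq : 0 < q) (hσ₀ : 0 < σ₀) (hσ₁ : 0 < σ₁)
    (hΔpos : 0 < Δ) (hΔ : Δ ^ 2 = (σ₁ ^ 2 - 2 * c₁) ^ 2 + 8 * q * σ₁ ^ 2)
    (a b α : ℝ) (ha : a = (Δ - σ₁ ^ 2 + 2 * c₁) / (2 * σ₁ ^ 2))
    (hb : b = 1 + Δ / σ₁ ^ 2) (hα : α = 2 * (c₀ * σ₁ - c₁ * σ₀) / σ₁ ^ 2)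
    (y u : ℝ → ℝ) (hy : ContDiff ℝ 2 y)
    (hode : ∀ w, w * iteratedDeriv 2 y w + (b - w) * deriv y w - a * y w = 0)
    (hu : ∀ x, u x = ((σ₀ + σ₁ * x)⁻¹) ^ a * y (α * (σ₀ + σ₁ * x)⁻¹)) :
    (∀ x > (0:ℝ), (σ₀ + σ₁ * x) ^ 2 / 2 * iteratedDeriv 2 u x
        + (c₀ + c₁ * x) * deriv u x - q * u x = 0) ∧
      σ₁ ^ 2 * a ^ 2 + (σ₁ ^ 2 - 2 * c₁) * a - 2 * q = 0 := by
  have hσ1ne : σ₁ ≠ 0 := hσ₁.ne'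
  have hΔeq : Δ = 2 * σ₁ ^ 2 * a + σ₁ ^ 2 - 2 * c₁ := by
    rw [ha]; field_simp; ring
  have hquad : σ₁ ^ 2 * a ^ 2 + (σ₁ ^ 2 - 2 * c₁) * a - 2 * q = 0 := by
    have h4 : 4 * σ₁ ^ 2 * (σ₁ ^ 2 * a ^ 2 + (σ₁ ^ 2 - 2 * c₁) * a - 2 * q)
        = 4 * σ₁ ^ 2 * 0 := by
      rw [hΔeq] at hΔ; linear_combination hΔ
    exact mul_left_cancel₀ (by positivity) h4
  refine ⟨?_, hquad⟩
  have hbb : σ₁ ^ 2 * b = 2 * σ₁ ^ 2 * a + 2 * σ₁ ^ 2 - 2 * c₁ := by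
    rw [hb, hΔeq]; field_simp; ring
  have hαα : σ₁ ^ 2 * α = 2 * (c₀ * σ₁ - c₁ * σ₀) := by
    rw [hα]; field_simp
  have hdy := contDiff_succ_iff_deriv.mp (show ContDiff ℝ ((1 : ℕ) + 1) y by exact_mod_cast hy)
  have hy1 : Differentiable ℝ y := hdy.1
  have hy2 : Differentiable ℝ (deriv y) := hdy.2.2.differentiable (by simp)
  have hiter : iteratedDeriv 2 y = deriv (deriv y) := by
    rw [iteratedDeriv_succ, iteratedDeriv_one]
  obtain rfl : u = fun t => ((σ₀ + σ₁ * t)⁻¹) ^ a * y (α * (σ₀ + σ₁ * t)⁻¹) := funext hu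
  intro x hx
  have hS : ∀ t : ℝ, 0 < t → 0 < σ₀ + σ₁ * t := fun t ht =>
    add_pos hσ₀ (mul_pos hσ₁ ht)
  -- derivative of z(t) = (σ₀+σ₁t)⁻¹
  have hZ : ∀ t : ℝ, 0 < t →
      HasDerivAt (fun s => (σ₀ + σ₁ * s)⁻¹) (-σ₁ * ((σ₀ + σ₁ * t)⁻¹) ^ 2) t := by
    intro t ht
    have h1 : HasDerivAt (fun s : ℝ => σ₀ + σ₁ * s) σ₁ t := by
      simpa using ((hasDerivAt_id t).const_mul σ₁).const_add σ₀
    have h2 := h1.inv (hS t ht).ne'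
    refine h2.congr_deriv ?_
    symm
    field_simp
  -- first derivative of u
  have hU : ∀ t : ℝ, 0 < t →
      HasDerivAt (fun s => ((σ₀ + σ₁ * s)⁻¹) ^ a * y (α * (σ₀ + σ₁ * s)⁻¹))
        (((σ₀ + σ₁ * t)⁻¹) ^ a * (-σ₁) *
          (a * (σ₀ + σ₁ * t)⁻¹ * y (α * (σ₀ + σ₁ * t)⁻¹)
            + α * ((σ₀ + σ₁ * t)⁻¹) ^ 2 * deriv y (α * (σ₀ + σ₁ * t)⁻¹))) t := by
    intro t ht
    set z := (σ₀ + σ₁ * t)⁻¹ with hzdef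
    have hzpos : 0 < z := inv_pos.mpr (hS t ht)
    have hA : HasDerivAt (fun s => ((σ₀ + σ₁ * s)⁻¹) ^ a)
        ((a * z ^ (a - 1)) * (-σ₁ * z ^ 2)) t := by
      exact (Real.hasDerivAt_rpow_const (x := z) (p := a) (Or.inl hzpos.ne')).comp
        t (hZ t ht)
    have hB : HasDerivAt (fun s => y (α * (σ₀ + σ₁ * s)⁻¹))
        (deriv y (α * z) * (α * (-σ₁ * z ^ 2))) t := by
      exact ((hy1 (α * z)).hasDerivAt).comp t ((hZ t ht).const_mul α)
    have hmul := hA.mul hB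
    refine hmul.congr_deriv ?_
    symm
    have hzz : z ^ (a - 1) * z = z ^ a := by
      rw [Real.rpow_sub hzpos, Real.rpow_one]
      field_simp
    linear_combination (σ₁ * a * y (α * z) * z) * hzz
  -- the first-derivative function
  set D : ℝ → ℝ := fun t => ((σ₀ + σ₁ * t)⁻¹) ^ a * (-σ₁) *
      (a * (σ₀ + σ₁ * t)⁻¹ * y (α * (σ₀ + σ₁ * t)⁻¹)
        + α * ((σ₀ + σ₁ * t)⁻¹) ^ 2 * deriv y (α * (σ₀ + σ₁ * t)⁻¹)) with hDdef
  have hEq : Set.EqOn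
      (deriv (fun s => ((σ₀ + σ₁ * s)⁻¹) ^ a * y (α * (σ₀ + σ₁ * s)⁻¹))) D
      (Set.Ioi 0) := fun t ht => (hU t ht).deriv
  -- second derivative at x
  set z := (σ₀ + σ₁ * x)⁻¹ with hzdef
  have hzpos : 0 < z := inv_pos.mpr (hS x hx)
  set Y := y (α * z) with hYdef
  set Y₁ := deriv y (α * z) with hY1def
  set Y₂ := deriv (deriv y) (α * z) with hY2def
  have hD2 : HasDerivAt D
      (z ^ a * σ₁ ^ 2 *
        (a * (a + 1) * z ^ 2 * Y + (2 * a + 2) * α * z ^ 3 * Y₁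
          + α ^ 2 * z ^ 4 * Y₂)) x := by
    have hZx := hZ x hx
    have hA : HasDerivAt (fun s => ((σ₀ + σ₁ * s)⁻¹) ^ a)
        ((a * z ^ (a - 1)) * (-σ₁ * z ^ 2)) x := by
      exact (Real.hasDerivAt_rpow_const (x := z) (p := a) (Or.inl hzpos.ne')).comp
        x hZx
    have hB : HasDerivAt (fun s => y (α * (σ₀ + σ₁ * s)⁻¹))
        (Y₁ * (α * (-σ₁ * z ^ 2))) x := by
      exact ((hy1 (α * z)).hasDerivAt).comp x (hZx.const_mul α)
    have hB2 : HasDerivAt (fun s => deriv y (α * (σ₀ + σ₁ * s)⁻¹))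
        (Y₂ * (α * (-σ₁ * z ^ 2))) x := by
      exact ((hy2 (α * z)).hasDerivAt).comp x (hZx.const_mul α)
    have hZsq : HasDerivAt (fun s => ((σ₀ + σ₁ * s)⁻¹) ^ 2)
        (2 * z * (-σ₁ * z ^ 2)) x := by
      have h := hZx.pow 2
      have he : ((2 : ℕ) : ℝ) * (σ₀ + σ₁ * x)⁻¹ ^ (2 - 1) * (-σ₁ * (σ₀ + σ₁ * x)⁻¹ ^ 2)
          = 2 * z * (-σ₁ * z ^ 2) := by
        rw [hzdef]
        push_cast
        ring
      rwa [he] at h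
    have hinner : HasDerivAt
        (fun s => a * (σ₀ + σ₁ * s)⁻¹ * y (α * (σ₀ + σ₁ * s)⁻¹)
          + α * ((σ₀ + σ₁ * s)⁻¹) ^ 2 * deriv y (α * (σ₀ + σ₁ * s)⁻¹))
        ((a * (-σ₁ * z ^ 2)) * Y + (a * z) * (Y₁ * (α * (-σ₁ * z ^ 2)))
          + ((α * (2 * z * (-σ₁ * z ^ 2))) * Y₁
            + (α * z ^ 2) * (Y₂ * (α * (-σ₁ * z ^ 2))))) x :=
      ((hZx.const_mul a).mul hB).add ((hZsq.const_mul α).mul hB2)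
    have hfull := (hA.mul_const (-σ₁)).mul hinner
    refine hfull.congr_deriv ?_
    symm
    have hzz : z ^ (a - 1) * z = z ^ a := by
      rw [Real.rpow_sub hzpos, Real.rpow_one]
      field_simp
    linear_combination (-(σ₁ ^ 2 * a * (a * z * Y + α * z ^ 2 * Y₁) * z)) * hzz
  -- rewrite the goal using the computed derivatives
  have hd1 : deriv (fun s => ((σ₀ + σ₁ * s)⁻¹) ^ a * y (α * (σ₀ + σ₁ * s)⁻¹)) x
      = D x := (hU x hx).deriv
  have hd2 : iteratedDeriv 2
      (fun s => ((σ₀ + σ₁ * s)⁻¹) ^ a * y (α * (σ₀ + σ₁ * s)⁻¹)) x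
      = z ^ a * σ₁ ^ 2 *
        (a * (a + 1) * z ^ 2 * Y + (2 * a + 2) * α * z ^ 3 * Y₁
          + α ^ 2 * z ^ 4 * Y₂) := by
    rw [iteratedDeriv_succ, iteratedDeriv_one]
    have h1 : deriv (fun s => ((σ₀ + σ₁ * s)⁻¹) ^ a * y (α * (σ₀ + σ₁ * s)⁻¹))
        =ᶠ[nhds x] D := Filter.eventuallyEq_of_mem (isOpen_Ioi.mem_nhds hx) hEq
    rw [h1.deriv_eq]
    exact hD2.deriv
  rw [hd2, hd1]
  have hK : (α * z) * Y₂ + (b - α * z) * Y₁ - a * Y = 0 := by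
    have := hode (α * z)
    rwa [hiter] at this
  have he1 : (σ₀ + σ₁ * x) * z = 1 := mul_inv_cancel₀ (hS x hx).ne'
  simp only [hDdef, hzdef]
  linear_combination
    (((σ₀ + σ₁ * x)⁻¹) ^ a *
        (((σ₀ + σ₁ * x) * z + 1) *
            (σ₁ ^ 2 * a * (a + 1) * Y / 2 + σ₁ ^ 2 * (a + 1) * α * Y₁ * z
              + σ₁ ^ 2 * α ^ 2 * Y₂ * z ^ 2 / 2)
          - c₁ * a * Y - α * z * c₁ * Y₁)) * he1
    + (((σ₀ + σ₁ * x)⁻¹) ^ a * σ₁ ^ 2 * α * z / 2) * hK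
    + (((σ₀ + σ₁ * x)⁻¹) ^ a * Y / 2) * hquad
    - (((σ₀ + σ₁ * x)⁻¹) ^ a * α * z * Y₁ / 2) * hbb
    + (((σ₀ + σ₁ * x)⁻¹) ^ a * (a * z * Y / 2 + α * z ^ 2 * Y₁ / 2)) * hαα
end

section
/- Let q > 0, σ₀, σ₁ > 0, c₀ ∈ ℝ, c₁ > 0. Set a = q/c₁, b = 1 + 2(c₁σ₀ - c₀σ₁)/σ₁², α = 2c₁/σ₁², z(x) = σ₀ + σ₁x. If y solves the confluent hypergeometric equation w·y'' + ((1+b) - w)y' - (1+a)y = 0, then u(x) = e^{-2c₁x/σ₁} · z(x)^b · y(α·z(x)) solves (1/2)(σ₀+σ₁x)u'' + (c₀+c₁x)u' - qu = 0 on x > 0. -/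
/-- Change of variables for square-root volatility: with `a = q/c₁`,
`b = 1 + 2(c₁σ₀ - c₀σ₁)/σ₁²`, `α = 2c₁/σ₁²`, `z = σ₀ + σ₁x`, if `y` solves the Kummer
equation `w y'' + ((1+b) - w) y' - (1+a) y = 0`, then
`u(x) = e^{-2c₁x/σ₁} z^b y(αz)` solves `((σ₀+σ₁x)/2) u'' + (c₀+c₁x) u' - q u = 0` on
`x > 0`. -/
theorem kummer_change_of_variables_cir
    (q σ₀ σ₁ c₀ c₁ : ℝ) (hq : 0 < q) (hσ₀ : 0 < σ₀) (hσ₁ : 0 < σ₁) (hc₁ : 0 < c₁)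
    (a b α : ℝ) (ha : a = q / c₁) (hb : b = 1 + 2 * (c₁ * σ₀ - c₀ * σ₁) / σ₁ ^ 2)
    (hα : α = 2 * c₁ / σ₁ ^ 2)
    (y u : ℝ → ℝ) (hy : ContDiff ℝ 2 y)
    (hode : ∀ w, w * iteratedDeriv 2 y w + ((1 + b) - w) * deriv y w - (1 + a) * y w = 0)
    (hu : ∀ x, u x = Real.exp (-2 * c₁ * x / σ₁) * (σ₀ + σ₁ * x) ^ b
        * y (α * (σ₀ + σ₁ * x))) :
    ∀ x > (0:ℝ), (σ₀ + σ₁ * x) / 2 * iteratedDeriv 2 u x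
      + (c₀ + c₁ * x) * deriv u x - q * u x = 0 := by
  have hy1 : Differentiable ℝ y := hy.differentiable (by norm_num)
  have hy2 : Differentiable ℝ (deriv y) :=
    ((contDiff_succ_iff_deriv.mp (by exact_mod_cast hy : ContDiff ℝ (1+1) y)).2.2).differentiable
      one_ne_zero
  have hufun : u = fun t => Real.exp (-2 * c₁ * t / σ₁) * (σ₀ + σ₁ * t) ^ b
      * y (α * (σ₀ + σ₁ * t)) := funext hu
  -- derivative function
  set D : ℝ → ℝ := fun t => Real.exp (-2 * c₁ * t / σ₁) *
      (-(2*c₁/σ₁) * (σ₀ + σ₁ * t) ^ b * y (α * (σ₀ + σ₁ * t))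
        + σ₁ * b * (σ₀ + σ₁ * t) ^ (b-1) * y (α * (σ₀ + σ₁ * t))
        + α * σ₁ * (σ₀ + σ₁ * t) ^ b * deriv y (α * (σ₀ + σ₁ * t))) with hD
  have hEderiv : ∀ t : ℝ, HasDerivAt (fun t : ℝ => Real.exp (-2 * c₁ * t / σ₁))
      (Real.exp (-2 * c₁ * t / σ₁) * (-2*c₁/σ₁)) t := fun t => by
    have h1 : HasDerivAt (fun t : ℝ => -2 * c₁ * t / σ₁) (-2*c₁/σ₁) t := by
      simpa using ((hasDerivAt_id t).const_mul (-2*c₁)).div_const σ₁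
    simpa [mul_comm] using h1.exp
  have hzderiv : ∀ t : ℝ, HasDerivAt (fun t : ℝ => σ₀ + σ₁ * t) σ₁ t := fun t => by
    simpa using ((hasDerivAt_id t).const_mul σ₁).const_add σ₀
  have huD : ∀ t : ℝ, 0 < σ₀ + σ₁ * t → HasDerivAt u (D t) t := by
    intro t ht
    rw [hufun]
    have hP : HasDerivAt (fun s : ℝ => (σ₀ + σ₁ * s) ^ b)
        (σ₁ * b * (σ₀ + σ₁ * t) ^ (b-1)) t :=
      (hzderiv t).rpow_const (Or.inl (ne_of_gt ht))
    have hY : HasDerivAt (fun s : ℝ => y (α * (σ₀ + σ₁ * s)))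
        (deriv y (α * (σ₀ + σ₁ * t)) * (α * σ₁)) t :=
      (hy1 _).hasDerivAt.comp t ((hzderiv t).const_mul α)
    have := ((hEderiv t).mul hP).mul hY
    exact this.congr_deriv (by rw [hD, Pi.mul_apply]; ring)
  intro x hx
  have hz0 : 0 < σ₀ + σ₁ * x := by positivity
  -- second derivative: deriv u =ᶠ D near x, so deriv (deriv u) x = deriv D x
  have hopen : ∀ᶠ t in nhds x, 0 < σ₀ + σ₁ * t := by
    have : Continuous fun t : ℝ => σ₀ + σ₁ * t := by continuity
    exact (this.tendsto x).eventually (eventually_gt_nhds hz0)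
  have hDu : deriv u =ᶠ[nhds x] D := hopen.mono fun t ht => (huD t ht).deriv
  -- derivative of D at x
  set z := σ₀ + σ₁ * x with hzdef
  set w := α * z with hwdef
  set E := Real.exp (-2 * c₁ * x / σ₁) with hE
  set Y := y w with hY0
  set Y1 := deriv y w with hY1
  set Y2 := deriv (deriv y) w with hY2
  have hD2 : HasDerivAt D
      (E * (-2*c₁/σ₁) * (-(2*c₁/σ₁) * z ^ b * Y + σ₁ * b * z ^ (b-1) * Y + α * σ₁ * z ^ b * Y1)
        + E * (-(2*c₁/σ₁) * (σ₁ * b * z ^ (b-1) * Y + z ^ b * (Y1 * (α * σ₁)))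
            + σ₁ * b * (σ₁ * (b-1) * z ^ (b-1-1) * Y + z ^ (b-1) * (Y1 * (α * σ₁)))
            + α * σ₁ * (σ₁ * b * z ^ (b-1) * Y1 + z ^ b * (Y2 * (α * σ₁))))) x := by
    have hP : HasDerivAt (fun s : ℝ => (σ₀ + σ₁ * s) ^ b)
        (σ₁ * b * z ^ (b-1)) x := (hzderiv x).rpow_const (Or.inl (ne_of_gt hz0))
    have hP1 : HasDerivAt (fun s : ℝ => (σ₀ + σ₁ * s) ^ (b-1))
        (σ₁ * (b-1) * z ^ (b-1-1)) x := (hzderiv x).rpow_const (Or.inl (ne_of_gt hz0))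
    have hYd : HasDerivAt (fun s : ℝ => y (α * (σ₀ + σ₁ * s))) (Y1 * (α * σ₁)) x :=
      (hy1 _).hasDerivAt.comp x ((hzderiv x).const_mul α)
    have hY1d : HasDerivAt (fun s : ℝ => deriv y (α * (σ₀ + σ₁ * s))) (Y2 * (α * σ₁)) x :=
      (hy2 _).hasDerivAt.comp x ((hzderiv x).const_mul α)
    have hG : HasDerivAt (fun t : ℝ =>
        -(2*c₁/σ₁) * (σ₀ + σ₁ * t) ^ b * y (α * (σ₀ + σ₁ * t))
          + σ₁ * b * (σ₀ + σ₁ * t) ^ (b-1) * y (α * (σ₀ + σ₁ * t))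
          + α * σ₁ * (σ₀ + σ₁ * t) ^ b * deriv y (α * (σ₀ + σ₁ * t)))
        (-(2*c₁/σ₁) * (σ₁ * b * z ^ (b-1) * Y + z ^ b * (Y1 * (α * σ₁)))
          + σ₁ * b * (σ₁ * (b-1) * z ^ (b-1-1) * Y + z ^ (b-1) * (Y1 * (α * σ₁)))
          + α * σ₁ * (σ₁ * b * z ^ (b-1) * Y1 + z ^ b * (Y2 * (α * σ₁)))) x := by
      have h1 := ((hP.const_mul (-(2*c₁/σ₁))).mul hYd)
      have h2 := ((hP1.const_mul (σ₁ * b)).mul hYd)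
      have h3 := ((hP.const_mul (α * σ₁)).mul hY1d)
      have := (h1.add h2).add h3
      exact this.congr_deriv (by ring)
    have := (hEderiv x).mul hG
    exact this.congr_deriv (by ring)
  have hderiv2 : iteratedDeriv 2 u x
      = E * (-2*c₁/σ₁) * (-(2*c₁/σ₁) * z ^ b * Y + σ₁ * b * z ^ (b-1) * Y + α * σ₁ * z ^ b * Y1)
        + E * (-(2*c₁/σ₁) * (σ₁ * b * z ^ (b-1) * Y + z ^ b * (Y1 * (α * σ₁)))
            + σ₁ * b * (σ₁ * (b-1) * z ^ (b-1-1) * Y + z ^ (b-1) * (Y1 * (α * σ₁)))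
            + α * σ₁ * (σ₁ * b * z ^ (b-1) * Y1 + z ^ b * (Y2 * (α * σ₁)))) := by
    rw [show iteratedDeriv 2 u = deriv (deriv u) by
      simp [iteratedDeriv_succ, iteratedDeriv_one]]
    rw [hDu.deriv_eq]
    exact hD2.deriv
  have hderiv1 : deriv u x = D x := (huD x hz0).deriv
  have huval : u x = E * z ^ b * Y := hu x
  -- rpow relations
  have hzb1 : z ^ (b-1) = z ^ b * z⁻¹ := by
    rw [show b - 1 = b - 1 from rfl, Real.rpow_sub hz0, Real.rpow_one, div_eq_mul_inv]
  have hzb2 : z ^ (b-1-1) = z ^ b * z⁻¹ * z⁻¹ := by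
    rw [Real.rpow_sub hz0 (b-1) 1, Real.rpow_one, hzb1, div_eq_mul_inv]
  -- Kummer equation at w
  have hk : w * Y2 + ((1 + b) - w) * Y1 - (1 + a) * Y = 0 := by
    have := hode w
    simpa [iteratedDeriv_succ, iteratedDeriv_one, hY0, hY1, hY2] using this
  -- final algebra
  rw [hderiv2, hderiv1, huval, hD]
  simp only [← hzdef, ← hY0, ← hY1, ← hE]
  have key : z / 2 *
      (E * (-2*c₁/σ₁) * (-(2*c₁/σ₁) * z ^ b * Y + σ₁ * b * z ^ (b-1) * Y + α * σ₁ * z ^ b * Y1)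
        + E * (-(2*c₁/σ₁) * (σ₁ * b * z ^ (b-1) * Y + z ^ b * (Y1 * (α * σ₁)))
            + σ₁ * b * (σ₁ * (b-1) * z ^ (b-1-1) * Y + z ^ (b-1) * (Y1 * (α * σ₁)))
            + α * σ₁ * (σ₁ * b * z ^ (b-1) * Y1 + z ^ b * (Y2 * (α * σ₁)))))
      + (c₀ + c₁ * x) * (E * (-(2*c₁/σ₁) * z ^ b * Y + σ₁ * b * z ^ (b-1) * Y
            + α * σ₁ * z ^ b * Y1))
      - q * (E * z ^ b * Y)
      = E * z ^ b * (σ₁ ^ 2 * α / 2) * (w * Y2 + ((1 + b) - w) * Y1 - (1 + a) * Y) := by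
    rw [hzb1, hzb2, hwdef, hzdef]
    subst ha hb hα
    have hσ₁' : σ₁ ≠ 0 := ne_of_gt hσ₁
    have hc₁' : c₁ ≠ 0 := ne_of_gt hc₁
    have hz' : σ₀ + σ₁ * x ≠ 0 := ne_of_gt hz0
    field_simp
    ring
  calc _ = E * z ^ b * (σ₁ ^ 2 * α / 2) * (w * Y2 + ((1 + b) - w) * Y1 - (1 + a) * Y) := key
    _ = 0 := by rw [hk]; ring
end
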